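/- Fix an integer k ≥ 2. For j ≥ 0 set (z;z)_j = ∏_{i=1}^{j} (1 − z^i) and h_j = z^{j(j+1)} · ∏_{i=1}^{j} (1 + (k−1) z^i), and for ℓ ≥ 1 define B_ℓ = Σ_{j=0}^∞ z^{ℓj} h_j (z;z)_j^{−2} · (ℓ + Σ_{m=1}^{j} (1 + 2(1 − z^m)^{−1} − (1 + (k−1) z^m)^{−1})) ∈ ℚ[[z]]. Then for all ℓ ≥ 1: B_{ℓ+2} − 2 B_{ℓ+1} + B_ℓ = z^{ℓ+2} B_{ℓ+2} + (k − 1) z^{ℓ+3} B_{ℓ+3}. -/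

import Mathlib

/-- The `q`-Pochhammer symbol `(z;z)_j = ∏_{i=1}^{j} (1 − zⁱ)` in `ℚ[[z]]`. -/
noncomputable def qPoch (j : ℕ) : PowerSeries ℚ :=
  ∏ i ∈ Finset.Icc 1 j, (1 - (PowerSeries.X : PowerSeries ℚ) ^ i)

/-- `h_j = z^{j(j+1)} · ((1−k)z; z)_j = z^{j(j+1)} · ∏_{i=1}^{j} (1 + (k−1) zⁱ)`. -/
noncomputable def hSer (k j : ℕ) : PowerSeries ℚ :=
  (PowerSeries.X : PowerSeries ℚ) ^ (j * (j + 1)) *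
    ∏ i ∈ Finset.Icc 1 j, (1 + PowerSeries.C ((k : ℚ) - 1) * PowerSeries.X ^ i)

/-- The `j`-th summand `z^{ℓj} h_j (z;z)_j^{−2}` of `A_ℓ`. -/
noncomputable def Aterm (k ℓ j : ℕ) : PowerSeries ℚ :=
  (PowerSeries.X : PowerSeries ℚ) ^ (ℓ * j) * hSer k j * ((qPoch j)⁻¹) ^ 2

/-- `A_ℓ = Σ_{j=0}^∞ z^{ℓj} h_j (z;z)_j^{−2}`.  The series converges in the `z`-adic
topology since `h_j` is divisible by `z^{j(j+1)}`; the coefficient of `zⁿ` only receives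
contributions from the finitely many `j ≤ n`, so the sum may be truncated there. -/
noncomputable def Aser (k ℓ : ℕ) : PowerSeries ℚ :=
  PowerSeries.mk fun n =>
    ∑ j ∈ Finset.range (n + 1), PowerSeries.coeff n (Aterm k ℓ j)

/-- The factor `ℓ + Σ_{m=1}^{j} (1 + 2(1 − z^m)^{−1} − (1 + (k−1) z^m)^{−1})`. -/
noncomputable def Bfactor (k ℓ j : ℕ) : PowerSeries ℚ :=
  (ℓ : PowerSeries ℚ) +
    ∑ m ∈ Finset.Icc 1 j,
      (1 + 2 * ((1 - (PowerSeries.X : PowerSeries ℚ) ^ m)⁻¹) -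
        ((1 + PowerSeries.C ((k : ℚ) - 1) * PowerSeries.X ^ m)⁻¹))

/-- The `j`-th summand of `B_ℓ`. -/
noncomputable def Bterm (k ℓ j : ℕ) : PowerSeries ℚ :=
  Aterm k ℓ j * Bfactor k ℓ j

/-- `B_ℓ = Σ_{j=0}^∞ z^{ℓj} h_j (z;z)_j^{−2} ·
(ℓ + Σ_{m=1}^{j} (1 + 2(1 − z^m)^{−1} − (1 + (k−1) z^m)^{−1}))`, the series converging
`z`-adically since `h_j` is divisible by `z^{j(j+1)}`. -/
noncomputable def Bser (k ℓ : ℕ) : PowerSeries ℚ :=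
  PowerSeries.mk fun n =>
    ∑ j ∈ Finset.range (n + 1), PowerSeries.coeff n (Bterm k ℓ j)

open PowerSeries Finset

lemma key (k ℓ j : ℕ) :
    Bterm k (ℓ + 2) (j + 1) - 2 * Bterm k (ℓ + 1) (j + 1) + Bterm k ℓ (j + 1) =
      (X : PowerSeries ℚ) ^ (ℓ + 2) * Bterm k (ℓ + 2) j +
        C ((k : ℚ) - 1) * ((X : PowerSeries ℚ) ^ (ℓ + 3) * Bterm k (ℓ + 3) j) := by
  have hu : (1 - (X : PowerSeries ℚ) ^ (j+1)) * (1 - (X : PowerSeries ℚ) ^ (j+1))⁻¹ = 1 :=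
    PowerSeries.mul_inv_cancel _ (by simp)
  have hv : (1 + C ((k:ℚ)-1) * X ^ (j+1)) * (1 + C ((k:ℚ)-1) * X ^ (j+1))⁻¹ = 1 :=
    PowerSeries.mul_inv_cancel _ (by simp)
  have hq : qPoch (j+1) = qPoch j * (1 - X ^ (j+1)) :=
    Finset.prod_Icc_succ_top (by omega) _
  have hqi : (qPoch (j+1))⁻¹ = (1 - (X : PowerSeries ℚ) ^ (j+1))⁻¹ * (qPoch j)⁻¹ := by
    rw [hq, PowerSeries.mul_inv_rev]
  have hH : hSer k (j+1) = X ^ ((j+1)*(j+2)) *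
      ((∏ i ∈ Icc 1 j, (1 + C ((k:ℚ)-1) * X ^ i)) * (1 + C ((k:ℚ)-1) * X ^ (j+1))) := by
    rw [hSer, Finset.prod_Icc_succ_top (by omega)]
  have hFa : Bfactor k (ℓ+1) (j+1) = Bfactor k ℓ j + 1 +
      (1 + 2 * (1 - (X : PowerSeries ℚ) ^ (j+1))⁻¹ - (1 + C ((k:ℚ)-1) * X ^ (j+1))⁻¹) := by
    rw [Bfactor, Bfactor, Finset.sum_Icc_succ_top (by omega)]; push_cast; ring
  have hFb : Bfactor k (ℓ+2) (j+1) = Bfactor k ℓ j + 2 +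
      (1 + 2 * (1 - (X : PowerSeries ℚ) ^ (j+1))⁻¹ - (1 + C ((k:ℚ)-1) * X ^ (j+1))⁻¹) := by
    rw [Bfactor, Bfactor, Finset.sum_Icc_succ_top (by omega)]; push_cast; ring
  have hFc : Bfactor k ℓ (j+1) = Bfactor k ℓ j +
      (1 + 2 * (1 - (X : PowerSeries ℚ) ^ (j+1))⁻¹ - (1 + C ((k:ℚ)-1) * X ^ (j+1))⁻¹) := by
    rw [Bfactor, Bfactor, Finset.sum_Icc_succ_top (by omega)]; ring
  have hFd : Bfactor k (ℓ+2) j = Bfactor k ℓ j + 2 := by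
    rw [Bfactor, Bfactor]; push_cast; ring
  have hFe : Bfactor k (ℓ+3) j = Bfactor k ℓ j + 3 := by
    rw [Bfactor, Bfactor]; push_cast; ring
  rw [Bterm, Bterm, Bterm, Bterm, Bterm, Aterm, Aterm, Aterm, Aterm, Aterm,
    hH, hqi, hFa, hFb, hFc, hFd, hFe, hSer]
  linear_combination
    (X : PowerSeries ℚ) ^ (ℓ*(j+1) + (j+1)*(j+2)) *
      (∏ i ∈ Icc 1 j, (1 + C ((k:ℚ)-1) * X ^ i)) * ((qPoch j)⁻¹)^2 *
      (1 + C ((k:ℚ)-1) * X ^ (j+1)) *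
      (((1 - (X : PowerSeries ℚ) ^ (j+1)) * (1 - (X : PowerSeries ℚ) ^ (j+1))⁻¹ + 1) *
          (Bfactor k ℓ j + 1 - (1 + C ((k:ℚ)-1) * X ^ (j+1))⁻¹) +
        2 * (1 - (X : PowerSeries ℚ) ^ (j+1))⁻¹ *
          ((1 - (X : PowerSeries ℚ) ^ (j+1)) * (1 - (X : PowerSeries ℚ) ^ (j+1))⁻¹ + 1) +
        2 - 2 * (X : PowerSeries ℚ) ^ (j+1) * (1 - (X : PowerSeries ℚ) ^ (j+1))⁻¹) * hu
    - (X : PowerSeries ℚ) ^ (ℓ*(j+1) + (j+1)*(j+2)) *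
      (∏ i ∈ Icc 1 j, (1 + C ((k:ℚ)-1) * X ^ i)) * ((qPoch j)⁻¹)^2 * hv


lemma Bterm_coeff_zero (k l j n : ℕ) (h : n < j) : PowerSeries.coeff n (Bterm k l j) = 0 := by
  have hdvd : (X : PowerSeries ℚ) ^ j ∣ Bterm k l j := by
    have h1 : (X : PowerSeries ℚ) ^ (j*(j+1)) ∣ hSer k j := by
      rw [hSer]; exact dvd_mul_right _ _
    have h2 : hSer k j ∣ Bterm k l j := by
      rw [Bterm, Aterm]; exact ((dvd_mul_left _ _).mul_right _).mul_right _
    exact dvd_trans (pow_dvd_pow X (by nlinarith : j ≤ j*(j+1))) (dvd_trans h1 h2)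
  rw [PowerSeries.X_pow_dvd_iff] at hdvd
  exact hdvd n h

lemma coeff_Bser (k l n M : ℕ) (h : n + 1 ≤ M) :
    PowerSeries.coeff n (Bser k l) = ∑ j ∈ Finset.range M, PowerSeries.coeff n (Bterm k l j) := by
  rw [Bser, coeff_mk]
  refine Finset.sum_subset (Finset.range_subset_range.2 h) fun j hj hj' => ?_
  exact Bterm_coeff_zero k l j n (by simp only [Finset.mem_range] at hj hj' ⊢; omega)

lemma coeff_X_pow_mul_Bser (k l d n : ℕ) :
    PowerSeries.coeff n ((X : PowerSeries ℚ) ^ d * Bser k l) =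
      ∑ j ∈ Finset.range (n + 1), PowerSeries.coeff n ((X : PowerSeries ℚ) ^ d * Bterm k l j) := by
  by_cases hd : d ≤ n
  · rw [PowerSeries.coeff_X_pow_mul', if_pos hd, coeff_Bser k l (n - d) (n + 1) (by omega)]
    refine Finset.sum_congr rfl fun j hj => ?_
    rw [PowerSeries.coeff_X_pow_mul', if_pos hd]
  · rw [PowerSeries.coeff_X_pow_mul', if_neg hd]
    refine (Finset.sum_eq_zero fun j hj => ?_).symm
    rw [PowerSeries.coeff_X_pow_mul', if_neg hd]

lemma Bterm_zero (k l : ℕ) : Bterm k l 0 = (l : PowerSeries ℚ) := by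
  simp [Bterm, Aterm, hSer, qPoch, Bfactor]


/-- For all `ℓ ≥ 1`:
`B_{ℓ+2} − 2 B_{ℓ+1} + B_ℓ = z^{ℓ+2} B_{ℓ+2} + (k − 1) z^{ℓ+3} B_{ℓ+3}`. -/
theorem B_solves_recurrence (k : ℕ) (hk : 2 ≤ k) (ℓ : ℕ) (hℓ : 1 ≤ ℓ) :
    Bser k (ℓ + 2) - 2 * Bser k (ℓ + 1) + Bser k ℓ =
      (PowerSeries.X : PowerSeries ℚ) ^ (ℓ + 2) * Bser k (ℓ + 2) +
        PowerSeries.C ((k : ℚ) - 1) * (PowerSeries.X : PowerSeries ℚ) ^ (ℓ + 3) *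
          Bser k (ℓ + 3) := by
  ext n
  rw [map_add, map_sub, two_mul, map_add, mul_assoc, map_add,
    PowerSeries.coeff_C_mul, coeff_X_pow_mul_Bser, coeff_X_pow_mul_Bser,
    coeff_Bser k (ℓ+2) n (n+2) (by omega), coeff_Bser k (ℓ+1) n (n+2) (by omega),
    coeff_Bser k ℓ n (n+2) (by omega)]
  have step1 :
      (∑ j ∈ Finset.range (n+2), PowerSeries.coeff n (Bterm k (ℓ+2) j)) -
        ((∑ j ∈ Finset.range (n+2), PowerSeries.coeff n (Bterm k (ℓ+1) j)) +
          ∑ j ∈ Finset.range (n+2), PowerSeries.coeff n (Bterm k (ℓ+1) j)) +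
        ∑ j ∈ Finset.range (n+2), PowerSeries.coeff n (Bterm k ℓ j) =
      ∑ j ∈ Finset.range (n+2),
        PowerSeries.coeff n
          (Bterm k (ℓ+2) j - 2 * Bterm k (ℓ+1) j + Bterm k ℓ j) := by
    rw [← Finset.sum_add_distrib, ← Finset.sum_sub_distrib, ← Finset.sum_add_distrib]
    refine Finset.sum_congr rfl fun j hj => ?_
    rw [map_add, map_sub, two_mul, map_add]
  rw [step1, Finset.sum_range_succ']
  have h0 : PowerSeries.coeff n (Bterm k (ℓ+2) 0 - 2 * Bterm k (ℓ+1) 0 + Bterm k ℓ 0) = 0 := by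
    have : Bterm k (ℓ+2) 0 - 2 * Bterm k (ℓ+1) 0 + Bterm k ℓ 0 = 0 := by
      rw [Bterm_zero, Bterm_zero, Bterm_zero]; push_cast; ring
    rw [this, map_zero]
  rw [h0, add_zero]
  have step2 : ∀ j ∈ Finset.range (n+1),
      PowerSeries.coeff n
          (Bterm k (ℓ+2) (j+1) - 2 * Bterm k (ℓ+1) (j+1) + Bterm k ℓ (j+1)) =
        PowerSeries.coeff n ((X : PowerSeries ℚ) ^ (ℓ+2) * Bterm k (ℓ+2) j) +
          ((k:ℚ) - 1) * PowerSeries.coeff n ((X : PowerSeries ℚ) ^ (ℓ+3) * Bterm k (ℓ+3) j) := by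
    intro j hj
    rw [key k ℓ j, map_add, PowerSeries.coeff_C_mul]
  rw [Finset.sum_congr rfl step2, Finset.sum_add_distrib, ← Finset.mul_sum]
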